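/- Let R > 0, γ ≥ 0 and t > 0. Suppose f̂ : ℂ → ℂ is complex differentiable on an open set containing {s ∈ ℂ : |s| ≥ R} ∪ {s ∈ ℂ : Re s ≥ γ}, that f̂(s) → 0 as |s| → ∞, and that the limit L := lim_{T→∞} ∫_{−T}^{T} e^{(γ+iy)t}·f̂(γ+iy)·i dy exists. Then L = ∫_0^{2π} e^{t·R·e^{iθ}}·f̂(R·e^{iθ})·i·R·e^{iθ} dθ. -/

import Mathlib

open MeasureTheory Filter

section BromwichAux

open Set intervalIntegral

lemma abs_sub_le_of_mem_uIcc {u v x : ℝ} (hx : x ∈ Set.uIcc u v) : |x - u| ≤ |v - u| := by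
  rw [Set.mem_uIcc] at hx
  rcases hx with ⟨h1, h2⟩ | ⟨h1, h2⟩ <;>
    exact abs_le.mpr ⟨by linarith [neg_abs_le (v - u), le_abs_self (v - u)],
      by linarith [neg_abs_le (v - u), le_abs_self (v - u)]⟩

lemma exists_primitive_halfplane (a : ℝ) (g : ℂ → ℂ)
    (hg : ∀ z : ℂ, a < z.re → DifferentiableAt ℂ g z) :
    ∃ F : ℂ → ℂ, ∀ z : ℂ, a < z.re → HasDerivAt F (g z) z := by
  have hgc : ∀ z : ℂ, a < z.re → ContinuousAt g z := fun z hz => (hg z hz).continuousAt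
  -- integrability helpers
  have hH : ∀ (c u v : ℝ), a < u → a < v →
      IntervalIntegrable (fun x : ℝ => g (↑x + ↑c * Complex.I)) volume u v := by
    intro c u v hu hv
    apply ContinuousOn.intervalIntegrable
    intro x hx
    have hax : a < x := lt_of_lt_of_le (lt_min hu hv) (Set.mem_uIcc.mp hx |>.elim
      (fun h => le_trans (min_le_left _ _) h.1) (fun h => le_trans (min_le_right _ _) h.1))
    have hc1 : ContinuousAt (fun x : ℝ => g (↑x + ↑c * Complex.I)) x := by
      have h2 := ContinuousAt.comp (x := x) (f := fun x : ℝ => (↑x + ↑c * Complex.I : ℂ))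
        (hgc (↑x + ↑c * Complex.I) (by simpa using hax))
        ((Complex.continuous_ofReal.add continuous_const).continuousAt)
      exact h2
    exact hc1.continuousWithinAt
  have hV : ∀ (r u v : ℝ), a < r →
      IntervalIntegrable (fun y : ℝ => g (↑r + ↑y * Complex.I)) volume u v := by
    intro r u v hr
    apply ContinuousOn.intervalIntegrable
    intro y _
    have hc1 : ContinuousAt (fun y : ℝ => g (↑r + ↑y * Complex.I)) y := by
      have h2 := ContinuousAt.comp (x := y) (f := fun y : ℝ => (↑r + ↑y * Complex.I : ℂ))
        (hgc (↑r + ↑y * Complex.I) (by simpa using hr))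
        ((continuous_const.add ((Complex.continuous_ofReal).mul continuous_const)).continuousAt)
      exact h2
    exact hc1.continuousWithinAt
  set b := a + 1 with hb
  set F : ℂ → ℂ := fun z =>
    (∫ x in b..z.re, g ↑x) + Complex.I * ∫ y in (0:ℝ)..z.im, g (↑z.re + ↑y * Complex.I) with hF
  have key : ∀ z w : ℂ, a < z.re → a < w.re →
      F w - F z = (∫ x in z.re..w.re, g (↑x + ↑z.im * Complex.I)) +
        Complex.I * ∫ y in z.im..w.im, g (↑w.re + ↑y * Complex.I) := by
    intro z w hz hw
    have hab : a < b := by simp [hb]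
    have h1 : (∫ x in b..z.re, g ↑x) + ∫ x in z.re..w.re, g ↑x = ∫ x in b..w.re, g ↑x := by
      apply integral_add_adjacent_intervals
      · simpa using hH 0 b z.re hab hz
      · simpa using hH 0 z.re w.re hz hw
    have h2 : (∫ y in (0:ℝ)..z.im, g (↑w.re + ↑y * Complex.I)) +
        ∫ y in z.im..w.im, g (↑w.re + ↑y * Complex.I)
        = ∫ y in (0:ℝ)..w.im, g (↑w.re + ↑y * Complex.I) :=
      integral_add_adjacent_intervals (hV _ _ _ hw) (hV _ _ _ hw)
    have rect := Complex.integral_boundary_rect_eq_zero_of_differentiableOn g (↑z.re)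
      (↑w.re + ↑z.im * Complex.I) ?diff
    case diff =>
      intro s hs
      rw [Complex.mem_reProdIm] at hs
      have : a < s.re := by
        have h := hs.1
        simp only [Complex.ofReal_re, Complex.add_re, Complex.mul_re, Complex.I_re,
          Complex.ofReal_im, Complex.I_im] at h
        rcases Set.mem_uIcc.mp h with ⟨h1, _⟩ | ⟨h1, _⟩
        · linarith
        · linarith
      exact (hg s this).differentiableWithinAt
    simp only [Complex.ofReal_re, Complex.add_re, Complex.mul_re, Complex.I_re, Complex.I_im,
      Complex.ofReal_im, Complex.add_im, Complex.mul_im, mul_zero, zero_mul, sub_zero, add_zero,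
      mul_one, zero_add, zero_sub, smul_eq_mul] at rect
    -- rect : (∫ x in z.re..w.re, g (↑x + ↑0 * I)) - (∫ x in z.re..w.re, g (↑x + ↑z.im * I))
    --   + I * (∫ y in 0..z.im, g (↑w.re + y I)) - I * (∫ y in 0..z.im, g (↑z.re + y I)) = 0
    simp only [hF]
    rw [← h1, ← h2]
    simp only [Complex.ofReal_zero, zero_mul, add_zero] at rect
    linear_combination rect
  refine ⟨F, fun z hz => ?_⟩
  rw [hasDerivAt_iff_isLittleO, Asymptotics.isLittleO_iff]
  intro c hc
  obtain ⟨δ, hδ0, hδ⟩ := Metric.continuousAt_iff.mp (hgc z hz) (c / 2) (by linarith)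
  set δ' := min δ (z.re - a) with hδ'
  have hδ'0 : 0 < δ' := lt_min hδ0 (by linarith)
  filter_upwards [Metric.ball_mem_nhds z (show (0:ℝ) < δ' / 2 by linarith)] with w hw
  rw [Metric.mem_ball, dist_eq_norm] at hw
  have hre : |w.re - z.re| ≤ ‖w - z‖ := by
    simpa using Complex.abs_re_le_norm (w - z)
  have him : |w.im - z.im| ≤ ‖w - z‖ := by
    simpa using Complex.abs_im_le_norm (w - z)
  have haw : a < w.re := by
    have := neg_abs_le (w.re - z.re)
    have h2 : ‖w - z‖ < δ' / 2 := hw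
    have h3 : δ' ≤ z.re - a := min_le_right _ _
    nlinarith [abs_nonneg (w.re - z.re)]
  have hkey := key z w hz haw
  -- rewrite the difference
  have hsub : F w - F z - (w - z) * g z =
      (∫ x in z.re..w.re, (g (↑x + ↑z.im * Complex.I) - g z)) +
        Complex.I * ∫ y in z.im..w.im, (g (↑w.re + ↑y * Complex.I) - g z) := by
    rw [integral_sub (hH z.im z.re w.re hz haw) (intervalIntegrable_const),
      integral_sub (hV w.re z.im w.im haw) (intervalIntegrable_const), hkey]
    simp only [intervalIntegral.integral_const, Complex.real_smul, Complex.ofReal_sub]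
    have hwz : w - z = (↑(w.re - z.re) : ℂ) + (↑(w.im - z.im) : ℂ) * Complex.I := by
      simp [Complex.ext_iff]
    rw [hwz]
    push_cast
    ring
  rw [show F w - F z - (w - z) • g z = (∫ x in z.re..w.re, (g (↑x + ↑z.im * Complex.I) - g z)) +
        Complex.I * ∫ y in z.im..w.im, (g (↑w.re + ↑y * Complex.I) - g z) by
      rw [← hsub, smul_eq_mul]]
  have hb1 : ‖∫ x in z.re..w.re, (g (↑x + ↑z.im * Complex.I) - g z)‖ ≤
      c / 2 * |w.re - z.re| := by
    apply intervalIntegral.norm_integral_le_of_norm_le_const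
    intro x hx
    have hx' : x ∈ Set.uIcc z.re w.re := Set.uIoc_subset_uIcc hx
    have hd : dist (↑x + ↑z.im * Complex.I) z < δ := by
      rw [Complex.dist_eq]
      have : (↑x + ↑z.im * Complex.I - z) = ((x - z.re : ℝ) : ℂ) := by
        simp [Complex.ext_iff]
      rw [this]
      calc ‖((x - z.re : ℝ) : ℂ)‖ = |x - z.re| := by rw [Complex.norm_real, Real.norm_eq_abs]
        _ ≤ |w.re - z.re| := abs_sub_le_of_mem_uIcc hx'
        _ ≤ ‖w - z‖ := hre
        _ < δ := by
            have h3 : δ' ≤ δ := min_le_left _ _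
            linarith
    exact le_of_lt (by simpa [dist_eq_norm] using hδ hd)
  have hb2 : ‖∫ y in z.im..w.im, (g (↑w.re + ↑y * Complex.I) - g z)‖ ≤
      c / 2 * |w.im - z.im| := by
    apply intervalIntegral.norm_integral_le_of_norm_le_const
    intro y hy
    have hy' : y ∈ Set.uIcc z.im w.im := Set.uIoc_subset_uIcc hy
    have hd : dist (↑w.re + ↑y * Complex.I) z < δ := by
      rw [Complex.dist_eq]
      have : (↑w.re + ↑y * Complex.I - z) =
          ((w.re - z.re : ℝ) : ℂ) + ((y - z.im : ℝ) : ℂ) * Complex.I := by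
        simp [Complex.ext_iff]
      rw [this]
      calc ‖(((w.re - z.re : ℝ) : ℂ) + ((y - z.im : ℝ) : ℂ) * Complex.I)‖
          ≤ ‖((w.re - z.re : ℝ) : ℂ)‖ +
            ‖(((y - z.im : ℝ) : ℂ) * Complex.I)‖ := norm_add_le _ _
        _ ≤ |w.re - z.re| + |y - z.im| := by
            rw [norm_mul]
            simp [← Complex.ofReal_sub, Complex.norm_real, Complex.norm_I]
        _ ≤ ‖w - z‖ + |w.im - z.im| := add_le_add hre (abs_sub_le_of_mem_uIcc hy')
        _ ≤ ‖w - z‖ + ‖w - z‖ := by gcongr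
        _ < δ := by
            have h3 : δ' ≤ δ := min_le_left _ _
            linarith
    exact le_of_lt (by simpa [dist_eq_norm] using hδ hd)
  calc ‖(∫ x in z.re..w.re, (g (↑x + ↑z.im * Complex.I) - g z)) +
        Complex.I * ∫ y in z.im..w.im, (g (↑w.re + ↑y * Complex.I) - g z)‖
      ≤ ‖∫ x in z.re..w.re, (g (↑x + ↑z.im * Complex.I) - g z)‖ +
        ‖Complex.I * ∫ y in z.im..w.im, (g (↑w.re + ↑y * Complex.I) - g z)‖ := norm_add_le _ _
    _ ≤ c / 2 * |w.re - z.re| + c / 2 * |w.im - z.im| := by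
        rw [norm_mul, Complex.norm_I, one_mul]
        exact add_le_add hb1 hb2
    _ ≤ c / 2 * ‖w - z‖ + c / 2 * ‖w - z‖ := by
        gcongr
    _ = c * ‖w - z‖ := by ring

section Main

variable {R γ t : ℝ}

/-- Pointwise norm of the circle integrand. -/
lemma circle_integrand_norm (t p : ℝ) (hp : 0 < p) (fhat : ℂ → ℂ) (θ : ℝ) :
    ‖Complex.exp (↑t * (↑p * Complex.exp (Complex.I * ↑θ))) *
        fhat (↑p * Complex.exp (Complex.I * ↑θ)) *
        (Complex.I * ↑p * Complex.exp (Complex.I * ↑θ))‖ =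
      Real.exp (t * (p * Real.cos θ)) * ‖fhat (↑p * Complex.exp (Complex.I * ↑θ))‖ * p := by
  have habs1 : ‖(Complex.exp (Complex.I * ↑θ))‖ = 1 := by
    rw [mul_comm]; exact Complex.norm_exp_ofReal_mul_I θ
  have hre : (Complex.exp (Complex.I * ↑θ)).re = Real.cos θ := by
    rw [mul_comm]; exact Complex.exp_ofReal_mul_I_re θ
  have habse : ‖(Complex.exp (↑t * (↑p * Complex.exp (Complex.I * ↑θ))))‖ =
      Real.exp (t * (p * Real.cos θ)) := by
    rw [Complex.norm_exp]
    congr 1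
    rw [Complex.re_ofReal_mul, Complex.re_ofReal_mul, hre]
  simp only [norm_mul, habse, habs1, Complex.norm_I,
    Complex.norm_real, Real.norm_eq_abs, abs_of_pos hp, one_mul, mul_one]

end Main

end BromwichAux

open Set intervalIntegral in
set_option maxHeartbeats 3200000 in
/-- the Bromwich line integral of `e^{st} f̂(s)` along `Re s = γ`
equals the contour integral along the positively oriented circle of radius `R`
centered at the origin. -/
theorem stmt_3 (R γ t : ℝ) (hR : 0 < R) (hγ : 0 ≤ γ) (ht : 0 < t)
    (fhat : ℂ → ℂ) (U : Set ℂ) (hU : IsOpen U)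
    (hUsub : {s : ℂ | R ≤ ‖s‖} ∪ {s : ℂ | γ ≤ s.re} ⊆ U)
    (hdiff : DifferentiableOn ℂ fhat U)
    (hdecay : Tendsto fhat (Filter.comap (fun s : ℂ => ‖s‖) atTop) (nhds 0))
    (L : ℂ)
    (hL : Tendsto
        (fun T : ℝ => ∫ y in (-T)..T,
          Complex.exp (((γ : ℂ) + Complex.I * (y : ℂ)) * (t : ℂ)) *
            fhat ((γ : ℂ) + Complex.I * (y : ℂ)) * Complex.I)
        atTop (nhds L)) :
    L = ∫ θ in (0:ℝ)..(2 * Real.pi),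
          Complex.exp ((t : ℂ) * (R : ℂ) * Complex.exp (Complex.I * (θ : ℂ))) *
            fhat ((R : ℂ) * Complex.exp (Complex.I * (θ : ℂ))) *
            Complex.I * (R : ℂ) * Complex.exp (Complex.I * (θ : ℂ)) := by
  have hπ := Real.pi_pos
  set g : ℂ → ℂ := fun s => Complex.exp (↑t * s) * fhat s with hgdef
  have hgU : ∀ z ∈ U, DifferentiableAt ℂ g z := by
    intro z hz
    exact ((differentiableAt_id.const_mul (t:ℂ)).cexp).mul (hdiff.differentiableAt (hU.mem_nhds hz))
  have hgcU : ∀ z ∈ U, ContinuousAt g z := fun z hz => (hgU z hz).continuousAt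
  have hmemR : ∀ z : ℂ, R ≤ ‖z‖ → z ∈ U := fun z h => hUsub (Or.inl h)
  -- a half-plane neighbourhood inside U
  obtain ⟨δ, hδ0, hmem⟩ : ∃ δ > 0, ∀ z : ℂ, γ - δ < z.re → z ∈ U := by
    have hKc : IsClosed Uᶜ := hU.isClosed_compl
    have hKb : Bornology.IsBounded Uᶜ := by
      apply (Metric.isBounded_ball (x := (0:ℂ)) (r := R)).subset
      intro z hz
      by_contra h
      exact hz (hmemR z (by
        rw [Metric.mem_ball, Complex.dist_eq, sub_zero] at h
        push_neg at h
        exact h))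
    have hK : IsCompact Uᶜ := Metric.isCompact_of_isClosed_isBounded hKc hKb
    have hHcl : IsClosed {z : ℂ | γ ≤ z.re} := isClosed_le continuous_const Complex.continuous_re
    have hdisj : Disjoint Uᶜ {z : ℂ | γ ≤ z.re} :=
      Set.disjoint_left.mpr fun z hzc hzH => hzc (hUsub (Or.inr hzH))
    obtain ⟨δ, hδ0, hthick⟩ := hdisj.exists_thickenings hK hHcl
    refine ⟨δ, hδ0, fun z hz => ?_⟩
    by_cases hzγ : γ ≤ z.re
    · exact hUsub (Or.inr hzγ)
    · push_neg at hzγ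
      by_contra hzU
      have h1 : z ∈ Metric.thickening δ Uᶜ := Metric.self_subset_thickening hδ0 _ hzU
      have h2 : z ∈ Metric.thickening δ {z : ℂ | γ ≤ z.re} := by
        rw [Metric.mem_thickening_iff]
        refine ⟨z + ((γ - z.re : ℝ) : ℂ), by simp, ?_⟩
        rw [Complex.dist_eq]
        have : z - (z + ((γ - z.re : ℝ) : ℂ)) = ((z.re - γ : ℝ) : ℂ) := by
          push_cast; ring
        rw [this, Complex.norm_real, Real.norm_eq_abs, abs_of_neg (by linarith)]
        linarith
      exact Set.disjoint_left.mp hthick h1 h2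
  -- primitive on the half-plane
  obtain ⟨F, hF⟩ := exists_primitive_halfplane (γ - δ) g
    (fun z hz => hgU z (hmem z hz))

  have hfc : ∀ z ∈ U, ContinuousAt fhat z :=
    fun z hz => (hdiff.differentiableAt (hU.mem_nhds hz)).continuousAt
  -- chord identity
  have chord : ∀ T : ℝ,
      (∫ y in (-T)..T, Complex.exp (((γ:ℂ) + Complex.I*(y:ℂ)) * (t:ℂ)) *
        fhat ((γ:ℂ) + Complex.I*(y:ℂ)) * Complex.I)
      = F ((γ:ℂ) + Complex.I*(T:ℂ)) - F ((γ:ℂ) + Complex.I*((-T:ℝ):ℂ)) := by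
    intro T
    have hpath : Continuous (fun y : ℝ => ((γ:ℂ) + Complex.I*(y:ℂ))) :=
      continuous_const.add (continuous_const.mul Complex.continuous_ofReal)
    have hderiv : ∀ y ∈ Set.uIcc (-T) T,
        HasDerivAt (fun y : ℝ => F ((γ:ℂ) + Complex.I*(y:ℂ)))
          (Complex.exp (((γ:ℂ) + Complex.I*(y:ℂ)) * (t:ℂ)) *
            fhat ((γ:ℂ) + Complex.I*(y:ℂ)) * Complex.I) y := by
      intro y _
      have hmem' : γ - δ < ((γ:ℂ) + Complex.I*(y:ℂ)).re := by simp; linarith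
      have hFz := hF _ hmem'
      have hc : HasDerivAt (fun y : ℝ => ((γ:ℂ) + Complex.I*(y:ℂ))) Complex.I y := by
        have h1 : HasDerivAt (fun y : ℝ => ((y:ℝ) : ℂ)) 1 y := by
          simpa using (hasDerivAt_id y).ofReal_comp
        simpa using (h1.const_mul Complex.I).const_add (γ:ℂ)
      have hcomp := hFz.scomp (x := y) hc
      have h2 : HasDerivAt (fun y : ℝ => F ((γ:ℂ) + Complex.I*(y:ℂ)))
          (Complex.I • g ((γ:ℂ) + Complex.I*(y:ℂ))) y := by
        simpa [Function.comp_def] using hcomp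
      convert h2 using 1
      simp only [hgdef, smul_eq_mul]
      rw [mul_comm ((γ:ℂ) + Complex.I*(y:ℂ)) (t:ℂ)]
      ring
    have hint : IntervalIntegrable (fun y : ℝ =>
        Complex.exp (((γ:ℂ) + Complex.I*(y:ℂ)) * (t:ℂ)) *
          fhat ((γ:ℂ) + Complex.I*(y:ℂ)) * Complex.I) volume (-T) T := by
      apply Continuous.intervalIntegrable
      rw [continuous_iff_continuousAt]
      intro y
      have hU' : ((γ:ℂ) + Complex.I*(y:ℂ)) ∈ U := hmem _ (by simp; linarith)
      have hfcomp := ContinuousAt.comp (x := y)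
        (f := fun y : ℝ => ((γ:ℂ) + Complex.I*(y:ℂ))) (hfc _ hU') hpath.continuousAt
      exact ((Complex.continuous_exp.continuousAt.comp
        ((hpath.mul continuous_const).continuousAt)).mul hfcomp).mul continuousAt_const
    simpa using intervalIntegral.integral_eq_sub_of_hasDerivAt hderiv hint
  -- radius and angle parameters
  set ρ : ℝ → ℝ := fun T => Real.sqrt (γ^2 + T^2) with hρdef
  set θ₀ : ℝ → ℝ := fun T => Real.arccos (γ / ρ T) with hθdef
  have hfact : ∀ T : ℝ, 0 < T → 0 < ρ T ∧ T ≤ ρ T ∧ γ ≤ ρ T ∧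
      Real.cos (θ₀ T) = γ / ρ T ∧ Real.sin (θ₀ T) = T / ρ T ∧
      0 ≤ θ₀ T ∧ θ₀ T ≤ Real.pi/2 := by
    intro T hT
    have hp0 : 0 < ρ T := Real.sqrt_pos.mpr (by nlinarith)
    have hTp : T ≤ ρ T := by
      rw [hρdef]
      calc T = Real.sqrt (T^2) := (Real.sqrt_sq hT.le).symm
        _ ≤ Real.sqrt (γ^2 + T^2) := Real.sqrt_le_sqrt (by nlinarith)
    have hγp : γ ≤ ρ T := by
      rw [hρdef]
      calc γ = Real.sqrt (γ^2) := (Real.sqrt_sq hγ).symm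
        _ ≤ Real.sqrt (γ^2 + T^2) := Real.sqrt_le_sqrt (by nlinarith)
    have hd0 : 0 ≤ γ / ρ T := by positivity
    have hd1 : γ / ρ T ≤ 1 := by rw [div_le_one hp0]; exact hγp
    have hsq : (ρ T)^2 = γ^2 + T^2 := Real.sq_sqrt (by positivity)
    refine ⟨hp0, hTp, hγp, Real.cos_arccos (by linarith) hd1, ?_, Real.arccos_nonneg _,
      Real.arccos_le_pi_div_two.mpr hd0⟩
    rw [hθdef]
    simp only []
    rw [Real.sin_arccos]
    have : 1 - (γ / ρ T)^2 = (T / ρ T)^2 := by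
      field_simp
      linarith [hsq]
    rw [this, Real.sqrt_sq (by positivity)]
  -- the circle integrand
  set cf : ℝ → ℝ → ℂ := fun p θ =>
    g ((p:ℂ) * Complex.exp (Complex.I*(θ:ℂ))) *
      (Complex.I * (p:ℂ) * Complex.exp (Complex.I*(θ:ℂ))) with hcfdef
  have hcontC : ∀ p : ℝ, R ≤ p → Continuous (cf p) := by
    intro p hp
    have hp0 : 0 < p := lt_of_lt_of_le hR hp
    have hpathc : Continuous (fun θ : ℝ => ((p:ℂ) * Complex.exp (Complex.I*(θ:ℂ)))) :=
      continuous_const.mul (Complex.continuous_exp.comp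
        (continuous_const.mul Complex.continuous_ofReal))
    rw [continuous_iff_continuousAt]
    intro θ
    have habs : ‖((p:ℂ) * Complex.exp (Complex.I*(θ:ℂ)))‖ = p := by
      rw [norm_mul, Complex.norm_real, Real.norm_eq_abs, abs_of_pos hp0, mul_comm Complex.I,
        Complex.norm_exp_ofReal_mul_I, mul_one]
    have hU' : ((p:ℂ) * Complex.exp (Complex.I*(θ:ℂ))) ∈ U := hmemR _ (by rw [habs]; exact hp)
    have hgcomp := ContinuousAt.comp (x := θ)
      (f := fun θ : ℝ => ((p:ℂ) * Complex.exp (Complex.I*(θ:ℂ)))) (hgcU _ hU') hpathc.continuousAt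
    have hexpc : Continuous (fun θ : ℝ => Complex.exp (Complex.I*(θ:ℂ))) :=
      Complex.continuous_exp.comp (continuous_const.mul Complex.continuous_ofReal)
    exact hgcomp.mul (continuous_const.mul hexpc).continuousAt
  -- arc identity
  have harc : ∀ T : ℝ, max R 1 ≤ T →
      (∫ θ in (-(θ₀ T))..(θ₀ T), cf (ρ T) θ)
        = F ((γ:ℂ) + Complex.I*(T:ℂ)) - F ((γ:ℂ) + Complex.I*((-T:ℝ):ℂ)) := by
    intro T hT
    have hT0 : (0:ℝ) < T := lt_of_lt_of_le one_pos (le_trans (le_max_right R 1) hT)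
    obtain ⟨hp0, hTp, hγp, hcos, hsin, hθ0, hθπ⟩ := hfact T hT0
    have hpR : R ≤ ρ T := le_trans (le_trans (le_max_left R 1) hT) hTp
    have hderiv : ∀ θ ∈ Set.uIcc (-(θ₀ T)) (θ₀ T),
        HasDerivAt (fun θ : ℝ => F ((ρ T : ℂ) * Complex.exp (Complex.I*(θ:ℂ))))
          (cf (ρ T) θ) θ := by
      intro θ hθ
      rw [Set.uIcc_of_le (by linarith)] at hθ
      obtain ⟨hθ1, hθ2⟩ := hθ
      have habsθ : |θ| ≤ θ₀ T := abs_le.mpr ⟨by linarith, hθ2⟩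
      have hre : ((ρ T : ℂ) * Complex.exp (Complex.I*(θ:ℂ))).re = ρ T * Real.cos θ := by
        rw [Complex.re_ofReal_mul, mul_comm Complex.I, Complex.exp_ofReal_mul_I_re]
      have hcosθ : γ / ρ T ≤ Real.cos θ := by
        have h5 : Real.cos (θ₀ T) ≤ Real.cos |θ| :=
          Real.cos_le_cos_of_nonneg_of_le_pi (abs_nonneg θ) (by linarith) habsθ
        rw [Real.cos_abs] at h5
        rw [← hcos]
        exact h5
      have hmem' : γ - δ < ((ρ T : ℂ) * Complex.exp (Complex.I*(θ:ℂ))).re := by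
        rw [hre]
        have : γ ≤ ρ T * Real.cos θ := by
          calc γ = ρ T * (γ / ρ T) := by field_simp
            _ ≤ ρ T * Real.cos θ := by
              apply mul_le_mul_of_nonneg_left hcosθ hp0.le
        linarith
      have hFz := hF _ hmem'
      have hc : HasDerivAt (fun θ : ℝ => ((ρ T : ℂ) * Complex.exp (Complex.I*(θ:ℂ))))
          ((ρ T : ℂ) * (Complex.exp (Complex.I*(θ:ℂ)) * (Complex.I * 1))) θ := by
        have h1 : HasDerivAt (fun θ : ℝ => ((θ:ℝ) : ℂ)) 1 θ := by
          simpa using (hasDerivAt_id θ).ofReal_comp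
        exact ((h1.const_mul Complex.I).cexp).const_mul ((ρ T : ℂ))
      have hcomp := hFz.scomp (x := θ) hc
      have h2 : HasDerivAt (fun θ : ℝ => F ((ρ T : ℂ) * Complex.exp (Complex.I*(θ:ℂ))))
          (((ρ T : ℂ) * (Complex.exp (Complex.I*(θ:ℂ)) * (Complex.I * 1))) •
            g ((ρ T : ℂ) * Complex.exp (Complex.I*(θ:ℂ)))) θ := by
        simpa [Function.comp_def] using hcomp
      convert h2 using 1
      simp only [hcfdef, smul_eq_mul]
      ring
    have hint : ∀ a b : ℝ, IntervalIntegrable (cf (ρ T)) volume a b :=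
      fun a b => (hcontC (ρ T) hpR).intervalIntegrable a b
    have heval := intervalIntegral.integral_eq_sub_of_hasDerivAt hderiv (hint _ _)
    rw [heval]
    have hpt : ∀ φ : ℝ, ((ρ T : ℂ) * Complex.exp (Complex.I*(φ:ℂ)))
        = ((ρ T * Real.cos φ : ℝ) : ℂ) + Complex.I * ((ρ T * Real.sin φ : ℝ) : ℂ) := by
      intro φ
      rw [mul_comm Complex.I ((φ:ℝ):ℂ), Complex.exp_mul_I, ← Complex.ofReal_cos,
        ← Complex.ofReal_sin]
      push_cast
      ring
    rw [hpt, hpt]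
    have e1 : ρ T * Real.cos (θ₀ T) = γ := by rw [hcos]; field_simp
    have e2 : ρ T * Real.sin (θ₀ T) = T := by rw [hsin]; field_simp
    have e3 : ρ T * Real.cos (-(θ₀ T)) = γ := by rw [Real.cos_neg]; exact e1
    have e4 : ρ T * Real.sin (-(θ₀ T)) = -T := by rw [Real.sin_neg]; rw [mul_neg, e2]
    rw [e1, e2, e3, e4]
  -- splitting the circle
  have hsplit : ∀ T : ℝ, max R 1 ≤ T →
      (∫ θ in (0:ℝ)..(2*Real.pi), cf (ρ T) θ)
        = (∫ θ in (-(θ₀ T))..(θ₀ T), cf (ρ T) θ)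
          + ∫ θ in (θ₀ T)..(2*Real.pi - θ₀ T), cf (ρ T) θ := by
    intro T hT
    have hT0 : (0:ℝ) < T := lt_of_lt_of_le one_pos (le_trans (le_max_right R 1) hT)
    obtain ⟨hp0, hTp, hγp, hcos, hsin, hθ0, hθπ⟩ := hfact T hT0
    have hpR : R ≤ ρ T := le_trans (le_trans (le_max_left R 1) hT) hTp
    have hint : ∀ a b : ℝ, IntervalIntegrable (cf (ρ T)) volume a b :=
      fun a b => (hcontC (ρ T) hpR).intervalIntegrable a b
    have hper : Function.Periodic (cf (ρ T)) (2*Real.pi) := by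
      intro θ
      have hexp : Complex.exp (Complex.I*((θ + 2*Real.pi : ℝ):ℂ))
          = Complex.exp (Complex.I*(θ:ℂ)) := by
        push_cast
        rw [mul_add, Complex.exp_add,
          show Complex.I*(2*(Real.pi:ℂ)) = 2*(Real.pi:ℂ)*Complex.I by ring,
          Complex.exp_two_pi_mul_I, mul_one]
      simp only [hcfdef, hexp]
    have h0 : (∫ θ in (0:ℝ)..(2*Real.pi), cf (ρ T) θ)
        = ∫ θ in (-(θ₀ T))..(-(θ₀ T) + 2*Real.pi), cf (ρ T) θ := by
      simpa using hper.intervalIntegral_add_eq 0 (-(θ₀ T))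
    rw [h0, show -(θ₀ T) + 2*Real.pi = 2*Real.pi - θ₀ T by ring]
    exact (intervalIntegral.integral_add_adjacent_intervals (hint _ _) (hint _ _)).symm
  -- constancy of circle integral
  have hcirc : ∀ p : ℝ, R ≤ p →
      (∫ θ in (0:ℝ)..(2*Real.pi), cf p θ) = ∫ θ in (0:ℝ)..(2*Real.pi), cf R θ := by
    intro p hp
    have hconv : ∀ r : ℝ, (∮ z in C(0, r), g z) = ∫ θ in (0:ℝ)..(2*Real.pi), cf r θ := by
      intro r
      simp only [circleIntegral, deriv_circleMap, circleMap, zero_add, smul_eq_mul]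
      apply intervalIntegral.integral_congr
      intro θ _
      simp only [hcfdef]
      rw [mul_comm ((θ:ℝ):ℂ) Complex.I]
      ring
    have hann := Complex.circleIntegral_eq_of_differentiable_on_annulus_off_countable
      (c := (0:ℂ)) (f := g) (s := (∅ : Set ℂ)) hR hp Set.countable_empty ?cont ?diff
    · rw [← hconv, ← hconv, hann]
    case cont =>
      intro z hz
      have hz2 : R ≤ ‖z‖ := by
        have := hz.2
        rw [Metric.mem_ball, Complex.dist_eq, sub_zero] at this
        push_neg at this
        exact this
      exact (hgcU z (hmemR z hz2)).continuousWithinAt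
    case diff =>
      intro z hz
      have hz2 : R < ‖z‖ := by
        have := hz.1.2
        rw [Metric.mem_closedBall, Complex.dist_eq, sub_zero] at this
        push_neg at this
        exact this
      exact hgU z (hmemR z hz2.le)
  -- decay of fhat
  have hdec : ∀ ε : ℝ, 0 < ε → ∃ A : ℝ, ∀ s : ℂ, A ≤ ‖s‖ → ‖fhat s‖ ≤ ε := by
    intro ε hε
    have h := hdecay (Metric.ball_mem_nhds 0 hε)
    rw [Filter.mem_map, Filter.mem_comap] at h
    obtain ⟨S, hS, hsub⟩ := h
    obtain ⟨A, hA⟩ := Filter.mem_atTop_sets.mp hS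
    refine ⟨A, fun s hs => ?_⟩
    have : s ∈ fhat ⁻¹' Metric.ball 0 ε := hsub (by simpa using hA _ hs)
    rw [Set.mem_preimage, Metric.mem_ball, dist_zero_right] at this
    exact this.le
  -- bound on the left arc
  set C₀ : ℝ := Real.exp (t*γ) * (Real.pi * γ) + Real.pi / t with hC₀def
  have hC₀pos : 0 ≤ C₀ := by positivity
  have hLb : ∀ ε : ℝ, 0 < ε → ∃ A : ℝ, ∀ T : ℝ, max (max R 1) A ≤ T →
      ‖∫ θ in (θ₀ T)..(2*Real.pi - θ₀ T), cf (ρ T) θ‖ ≤ ε * C₀ := by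
    intro ε hε
    obtain ⟨A, hA⟩ := hdec ε hε
    refine ⟨A, fun T hT => ?_⟩
    have hRT : R ≤ T := le_trans (le_trans (le_max_left R 1) (le_max_left _ A)) hT
    have h1T : (1:ℝ) ≤ T := le_trans (le_trans (le_max_right R 1) (le_max_left _ A)) hT
    have hAT : A ≤ T := le_trans (le_max_right _ A) hT
    have hT0 : (0:ℝ) < T := lt_of_lt_of_le one_pos h1T
    obtain ⟨hp0, hTp, hγp, hcos, hsin, hθ0, hθπ⟩ := hfact T hT0
    have hpR : R ≤ ρ T := le_trans hRT hTp
    have hpA : A ≤ ρ T := le_trans hAT hTp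
    have habs : ∀ θ : ℝ, ‖((ρ T : ℂ) * Complex.exp (Complex.I*(θ:ℂ)))‖ = ρ T := by
      intro θ
      rw [norm_mul, Complex.norm_real, Real.norm_eq_abs, abs_of_pos hp0, mul_comm Complex.I,
        Complex.norm_exp_ofReal_mul_I, mul_one]
    have hfb : ∀ θ : ℝ, ‖fhat ((ρ T : ℂ) * Complex.exp (Complex.I*(θ:ℂ)))‖ ≤ ε :=
      fun θ => hA _ (by rw [habs θ]; exact hpA)
    have hFB : ∀ θ : ℝ, ‖cf (ρ T) θ‖ = Real.exp (t * (ρ T * Real.cos θ)) *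
        ‖fhat ((ρ T : ℂ) * Complex.exp (Complex.I*(θ:ℂ)))‖ * ρ T := by
      intro θ
      simp only [hcfdef, hgdef]
      exact circle_integrand_norm t (ρ T) hp0 fhat θ
    have hint : ∀ a b : ℝ, IntervalIntegrable (cf (ρ T)) volume a b :=
      fun a b => (hcontC (ρ T) hpR).intervalIntegrable a b
    -- bound `p (π/2 - θ₀) ≤ π/2 γ` via Jordan's inequality
    have hθsmall : ρ T * (Real.pi/2 - θ₀ T) ≤ Real.pi/2 * γ := by
      have hθT : θ₀ T = Real.arccos (γ / ρ T) := by rw [hθdef]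
      have harcsin : Real.pi/2 - θ₀ T = Real.arcsin (γ / ρ T) := by
        rw [hθT, Real.arccos_eq_pi_div_two_sub_arcsin]; ring
      have h01 : 0 ≤ γ / ρ T := by positivity
      have h11 : γ / ρ T ≤ 1 := by rw [div_le_one hp0]; exact hγp
      have hj := Real.mul_le_sin (Real.arcsin_nonneg.mpr h01) (Real.arcsin_le_pi_div_two _)
      rw [Real.sin_arcsin (by linarith) h11] at hj
      have hx : Real.arcsin (γ / ρ T) ≤ Real.pi/2 * (γ / ρ T) := by
        have h2 := mul_le_mul_of_nonneg_left hj (le_of_lt (by positivity : (0:ℝ) < Real.pi/2))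
        calc Real.arcsin (γ / ρ T) = Real.pi/2 * (2/Real.pi * Real.arcsin (γ / ρ T)) := by
              field_simp
          _ ≤ Real.pi/2 * (γ / ρ T) := h2
      rw [harcsin]
      calc ρ T * Real.arcsin (γ / ρ T) ≤ ρ T * (Real.pi/2 * (γ / ρ T)) :=
            mul_le_mul_of_nonneg_left hx hp0.le
        _ = Real.pi/2 * γ := by field_simp
    -- cap bound maker
    have hcapBound : ∀ a b : ℝ, (∀ θ, θ ∈ Set.uIoc a b → Real.cos θ ≤ γ / ρ T) →
        ‖∫ θ in a..b, cf (ρ T) θ‖ ≤ Real.exp (t*γ) * ε * ρ T * |b - a| := by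
      intro a b hcos'
      apply intervalIntegral.norm_integral_le_of_norm_le_const
      intro θ hθ
      rw [hFB θ]
      have e1 : Real.exp (t*(ρ T * Real.cos θ)) ≤ Real.exp (t*γ) := by
        apply Real.exp_le_exp.mpr
        have h6 : ρ T * Real.cos θ ≤ γ := by
          calc ρ T * Real.cos θ ≤ ρ T * (γ / ρ T) :=
                mul_le_mul_of_nonneg_left (hcos' θ hθ) hp0.le
            _ = γ := by field_simp
        nlinarith
      exact mul_le_mul_of_nonneg_right
        (mul_le_mul e1 (hfb θ) (norm_nonneg _) (Real.exp_pos _).le) hp0.le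
    have hP1 : ‖∫ θ in (θ₀ T)..(Real.pi/2), cf (ρ T) θ‖
        ≤ ε * (Real.exp (t*γ) * (Real.pi/2 * γ)) := by
      have hb := hcapBound (θ₀ T) (Real.pi/2) ?cos
      case cos =>
        intro θ hθ
        rw [Set.uIoc_of_le hθπ] at hθ
        rw [← hcos]
        exact Real.cos_le_cos_of_nonneg_of_le_pi hθ0 (by linarith [hθ.2]) hθ.1.le
      calc ‖∫ θ in (θ₀ T)..(Real.pi/2), cf (ρ T) θ‖
          ≤ Real.exp (t*γ) * ε * ρ T * |Real.pi/2 - θ₀ T| := hb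
        _ = ε * (Real.exp (t*γ) * (ρ T * |Real.pi/2 - θ₀ T|)) := by ring
        _ ≤ ε * (Real.exp (t*γ) * (Real.pi/2 * γ)) := by
            apply mul_le_mul_of_nonneg_left _ hε.le
            apply mul_le_mul_of_nonneg_left _ (Real.exp_pos _).le
            rw [abs_of_nonneg (by linarith)]
            exact hθsmall
    have hP4 : ‖∫ θ in (3*Real.pi/2)..(2*Real.pi - θ₀ T), cf (ρ T) θ‖
        ≤ ε * (Real.exp (t*γ) * (Real.pi/2 * γ)) := by
      have hb := hcapBound (3*Real.pi/2) (2*Real.pi - θ₀ T) ?cos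
      case cos =>
        intro θ hθ
        have hord : 3*Real.pi/2 ≤ 2*Real.pi - θ₀ T := by linarith
        rw [Set.uIoc_of_le hord] at hθ
        obtain ⟨h1, h2⟩ := hθ
        have h3 : Real.cos θ = Real.cos (2*Real.pi - θ) := (Real.cos_two_pi_sub θ).symm
        rw [h3, ← hcos]
        exact Real.cos_le_cos_of_nonneg_of_le_pi hθ0 (by linarith) (by linarith)
      have hlen : |2*Real.pi - θ₀ T - 3*Real.pi/2| = |Real.pi/2 - θ₀ T| := by
        congr 1; ring
      calc ‖∫ θ in (3*Real.pi/2)..(2*Real.pi - θ₀ T), cf (ρ T) θ‖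
          ≤ Real.exp (t*γ) * ε * ρ T * |2*Real.pi - θ₀ T - 3*Real.pi/2| := hb
        _ = ε * (Real.exp (t*γ) * (ρ T * |Real.pi/2 - θ₀ T|)) := by rw [hlen]; ring
        _ ≤ ε * (Real.exp (t*γ) * (Real.pi/2 * γ)) := by
            apply mul_le_mul_of_nonneg_left _ hε.le
            apply mul_le_mul_of_nonneg_left _ (Real.exp_pos _).le
            rw [abs_of_nonneg (by linarith)]
            exact hθsmall
    -- middle pieces
    have hs32 : Real.sin (3*Real.pi/2) = -1 := by
      rw [show 3*Real.pi/2 = Real.pi + Real.pi/2 by ring, Real.sin_add]; simp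
    have hc32 : Real.cos (3*Real.pi/2) = 0 := by
      rw [show 3*Real.pi/2 = Real.pi + Real.pi/2 by ring, Real.cos_add]; simp
    set k : ℝ := 2*t*(ρ T)/Real.pi with hkdef
    have hk0 : 0 < k := div_pos (by nlinarith) hπ
    have hI2 : (∫ u in (0:ℝ)..(Real.pi/2), Real.exp (-(k*u)))
        = (1 - Real.exp (-(k*(Real.pi/2))))/k := by
      have h3 := intervalIntegral.integral_comp_mul_left
        (a := (0:ℝ)) (b := Real.pi/2) (fun x => Real.exp x) (neg_ne_zero.mpr hk0.ne')
      simp only [neg_mul] at h3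
      rw [integral_exp] at h3
      simp only [mul_zero, neg_zero, Real.exp_zero, smul_eq_mul] at h3
      rw [h3]
      rw [inv_neg, div_eq_mul_inv]
      ring
    have hexpnn : Real.exp (-(k*(Real.pi/2))) ≤ 1 := by
      have h5 := Real.exp_le_exp.mpr (by nlinarith : -(k*(Real.pi/2)) ≤ 0)
      rwa [Real.exp_zero] at h5
    have hmidBound : ∀ a b : ℝ, a ≤ b → ∀ w : ℝ → ℝ,
        (∀ θ ∈ Set.uIoc a b, Real.sin (w θ) = -Real.cos θ ∧ 0 ≤ w θ ∧ w θ ≤ Real.pi/2) →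
        IntervalIntegrable (fun θ => ε * ρ T * Real.exp (-(k * w θ))) volume a b →
        (|∫ θ in a..b, ε * ρ T * Real.exp (-(k * w θ))| ≤ ε * (Real.pi/(2*t))) →
        ‖∫ θ in a..b, cf (ρ T) θ‖ ≤ ε * (Real.pi/(2*t)) := by
      intro a b hab w hw hgint hval
      have hb : ∀ᵐ θ ∂(volume.restrict (Set.uIoc a b)),
          ‖cf (ρ T) θ‖ ≤ ε * ρ T * Real.exp (-(k * w θ)) := by
        rw [ae_restrict_iff' measurableSet_uIoc]
        apply Filter.Eventually.of_forall
        intro θ hθ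
        obtain ⟨hwsin, hw0, hwπ⟩ := hw θ hθ
        have hj := Real.mul_le_sin hw0 hwπ
        rw [hwsin] at hj
        have hcb : t*(ρ T * Real.cos θ) ≤ -(k * w θ) := by
          rw [hkdef]
          have h7 := mul_le_mul_of_nonneg_left hj
            (by positivity : (0:ℝ) ≤ t * ρ T)
          have h8 : 2*t*ρ T/Real.pi*(w θ) = t*ρ T*(2/Real.pi*(w θ)) := by
            field_simp
          have h9 : t*(ρ T*Real.cos θ) = -(t*ρ T*(-Real.cos θ)) := by ring
          rw [h9, h8]
          linarith
        rw [hFB θ]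
        calc Real.exp (t*(ρ T*Real.cos θ)) *
              ‖fhat ((ρ T : ℂ) * Complex.exp (Complex.I*(θ:ℂ)))‖ * ρ T
            ≤ Real.exp (-(k * w θ)) * ε * ρ T :=
              mul_le_mul_of_nonneg_right
                (mul_le_mul (Real.exp_le_exp.mpr hcb) (hfb θ) (norm_nonneg _)
                  (Real.exp_pos _).le) hp0.le
          _ = ε * ρ T * Real.exp (-(k * w θ)) := by ring
      exact le_trans (intervalIntegral.norm_integral_le_abs_of_norm_le hb hgint) hval
    have hint2 : IntervalIntegrable (fun θ => ε * ρ T * Real.exp (-(k * (θ - Real.pi/2))))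
        volume (Real.pi/2) Real.pi := by
      apply Continuous.intervalIntegrable
      exact continuous_const.mul
        (Real.continuous_exp.comp ((continuous_const.mul (continuous_id.sub continuous_const)).neg))
    have hval2 : |∫ θ in (Real.pi/2)..Real.pi, ε * ρ T * Real.exp (-(k * (θ - Real.pi/2)))|
        ≤ ε * (Real.pi/(2*t)) := by
      have h9 := intervalIntegral.integral_comp_sub_right
        (a := Real.pi/2) (b := Real.pi) (fun u => Real.exp (-(k*u))) (Real.pi/2)
      rw [show Real.pi - Real.pi/2 = Real.pi/2 by ring, sub_self] at h9
      rw [intervalIntegral.integral_const_mul, h9, hI2]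
      rw [abs_of_nonneg (mul_nonneg (mul_nonneg hε.le hp0.le)
        (div_nonneg (by linarith) hk0.le))]
      calc ε * ρ T * ((1 - Real.exp (-(k*(Real.pi/2))))/k) ≤ ε * ρ T * (1/k) := by
            apply mul_le_mul_of_nonneg_left _ (mul_nonneg hε.le hp0.le)
            gcongr
            linarith [Real.exp_pos (-(k*(Real.pi/2)))]
        _ = ε * (Real.pi/(2*t)) := by
            rw [hkdef, one_div, inv_div]
            field_simp
    have hP2 : ‖∫ θ in (Real.pi/2)..Real.pi, cf (ρ T) θ‖ ≤ ε * (Real.pi/(2*t)) := by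
      apply hmidBound _ _ (by linarith) (fun θ => θ - Real.pi/2) ?_ hint2 hval2
      intro θ hθ
      rw [Set.uIoc_of_le (by linarith : Real.pi/2 ≤ Real.pi)] at hθ
      obtain ⟨h1, h2⟩ := hθ
      refine ⟨?_, by linarith, by linarith⟩
      rw [Real.sin_sub]; simp
    have hint3 : IntervalIntegrable (fun θ => ε * ρ T * Real.exp (-(k * (3*Real.pi/2 - θ))))
        volume Real.pi (3*Real.pi/2) := by
      apply Continuous.intervalIntegrable
      exact continuous_const.mul
        (Real.continuous_exp.comp ((continuous_const.mul (continuous_const.sub continuous_id)).neg))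
    have hval3 : |∫ θ in Real.pi..(3*Real.pi/2), ε * ρ T * Real.exp (-(k * (3*Real.pi/2 - θ)))|
        ≤ ε * (Real.pi/(2*t)) := by
      have h9 := intervalIntegral.integral_comp_sub_left
        (a := Real.pi) (b := 3*Real.pi/2) (fun u => Real.exp (-(k*u))) (3*Real.pi/2)
      rw [sub_self, show 3*Real.pi/2 - Real.pi = Real.pi/2 by ring] at h9
      rw [intervalIntegral.integral_const_mul, h9, hI2]
      rw [abs_of_nonneg (mul_nonneg (mul_nonneg hε.le hp0.le)
        (div_nonneg (by linarith) hk0.le))]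
      calc ε * ρ T * ((1 - Real.exp (-(k*(Real.pi/2))))/k) ≤ ε * ρ T * (1/k) := by
            apply mul_le_mul_of_nonneg_left _ (mul_nonneg hε.le hp0.le)
            gcongr
            linarith [Real.exp_pos (-(k*(Real.pi/2)))]
        _ = ε * (Real.pi/(2*t)) := by
            rw [hkdef, one_div, inv_div]
            field_simp
    have hP3 : ‖∫ θ in Real.pi..(3*Real.pi/2), cf (ρ T) θ‖ ≤ ε * (Real.pi/(2*t)) := by
      apply hmidBound _ _ (by linarith) (fun θ => 3*Real.pi/2 - θ) ?_ hint3 hval3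
      intro θ hθ
      rw [Set.uIoc_of_le (by linarith : Real.pi ≤ 3*Real.pi/2)] at hθ
      obtain ⟨h1, h2⟩ := hθ
      refine ⟨?_, by linarith, by linarith⟩
      rw [Real.sin_sub, hs32, hc32]; ring
    have a1 := intervalIntegral.integral_add_adjacent_intervals
      (hint (θ₀ T) (Real.pi/2)) (hint (Real.pi/2) Real.pi)
    have a2 := intervalIntegral.integral_add_adjacent_intervals
      (hint (θ₀ T) Real.pi) (hint Real.pi (3*Real.pi/2))
    have a3 := intervalIntegral.integral_add_adjacent_intervals
      (hint (θ₀ T) (3*Real.pi/2)) (hint (3*Real.pi/2) (2*Real.pi - θ₀ T))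
    rw [← a3, ← a2, ← a1]
    have hfin := add_le_add (add_le_add (add_le_add hP1 hP2) hP3) hP4
    calc ‖((∫ θ in (θ₀ T)..(Real.pi/2), cf (ρ T) θ) + ∫ θ in (Real.pi/2)..Real.pi, cf (ρ T) θ)
          + (∫ θ in Real.pi..(3*Real.pi/2), cf (ρ T) θ)
          + ∫ θ in (3*Real.pi/2)..(2*Real.pi - θ₀ T), cf (ρ T) θ‖
        ≤ ‖((∫ θ in (θ₀ T)..(Real.pi/2), cf (ρ T) θ) + ∫ θ in (Real.pi/2)..Real.pi, cf (ρ T) θ)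
          + (∫ θ in Real.pi..(3*Real.pi/2), cf (ρ T) θ)‖
          + ‖∫ θ in (3*Real.pi/2)..(2*Real.pi - θ₀ T), cf (ρ T) θ‖ := norm_add_le _ _
      _ ≤ (‖(∫ θ in (θ₀ T)..(Real.pi/2), cf (ρ T) θ) + ∫ θ in (Real.pi/2)..Real.pi, cf (ρ T) θ‖
          + ‖∫ θ in Real.pi..(3*Real.pi/2), cf (ρ T) θ‖)
          + ‖∫ θ in (3*Real.pi/2)..(2*Real.pi - θ₀ T), cf (ρ T) θ‖ := by
            gcongr
            exact norm_add_le _ _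
      _ ≤ ((‖∫ θ in (θ₀ T)..(Real.pi/2), cf (ρ T) θ‖
          + ‖∫ θ in (Real.pi/2)..Real.pi, cf (ρ T) θ‖)
          + ‖∫ θ in Real.pi..(3*Real.pi/2), cf (ρ T) θ‖)
          + ‖∫ θ in (3*Real.pi/2)..(2*Real.pi - θ₀ T), cf (ρ T) θ‖ := by
            gcongr
            exact norm_add_le _ _
      _ ≤ ((ε * (Real.exp (t*γ) * (Real.pi/2 * γ)) + ε * (Real.pi/(2*t)))
          + ε * (Real.pi/(2*t))) + ε * (Real.exp (t*γ) * (Real.pi/2 * γ)) := hfin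
      _ = ε * C₀ := by
            rw [hC₀def]
            field_simp
            ring
  have hLft : Tendsto (fun T => ∫ θ in (θ₀ T)..(2*Real.pi - θ₀ T), cf (ρ T) θ)
      atTop (nhds 0) := by
    rw [NormedAddCommGroup.tendsto_nhds_zero]
    intro ε₀ hε₀
    obtain ⟨A, hA⟩ := hLb (ε₀ / (C₀+1)) (by positivity)
    filter_upwards [eventually_ge_atTop (max (max R 1) A)] with T hT
    calc ‖∫ θ in (θ₀ T)..(2*Real.pi - θ₀ T), cf (ρ T) θ‖ ≤ (ε₀/(C₀+1)) * C₀ := hA T hT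
      _ < ε₀ := by rw [div_mul_eq_mul_div, div_lt_iff₀ (by positivity)]; nlinarith
  -- assembly
  have hEq : ∀ᶠ T in atTop, (∫ y in (-T)..T,
        Complex.exp (((γ:ℂ) + Complex.I*(y:ℂ)) * (t:ℂ)) *
          fhat ((γ:ℂ) + Complex.I*(y:ℂ)) * Complex.I)
      = (∫ θ in (0:ℝ)..(2*Real.pi), cf R θ)
        - ∫ θ in (θ₀ T)..(2*Real.pi - θ₀ T), cf (ρ T) θ := by
    filter_upwards [eventually_ge_atTop (max R 1)] with T hT
    have hT0 : (0:ℝ) < T := lt_of_lt_of_le one_pos (le_trans (le_max_right R 1) hT)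
    obtain ⟨hp0, hTp, hγp, hcos, hsin, hθ0, hθπ⟩ := hfact T hT0
    have hpR : R ≤ ρ T := le_trans (le_trans (le_max_left R 1) hT) hTp
    have h1 := chord T
    have h2 := harc T hT
    have h3 := hsplit T hT
    have h4 := hcirc (ρ T) hpR
    rw [h1]
    linear_combination -h3 + h4 - h2
  have hT2 : Tendsto (fun T : ℝ => ∫ y in (-T)..T,
        Complex.exp (((γ:ℂ) + Complex.I*(y:ℂ)) * (t:ℂ)) *
          fhat ((γ:ℂ) + Complex.I*(y:ℂ)) * Complex.I)
      atTop (nhds ((∫ θ in (0:ℝ)..(2*Real.pi), cf R θ) - 0)) :=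
    Filter.Tendsto.congr' (by filter_upwards [hEq] with T h using h.symm)
      (tendsto_const_nhds.sub hLft)
  have hLval := tendsto_nhds_unique hL hT2
  rw [hLval, sub_zero]
  apply intervalIntegral.integral_congr
  intro θ _
  simp only [hcfdef, hgdef]
  rw [show ((t:ℂ) * ((R:ℂ) * Complex.exp (Complex.I*(θ:ℂ))))
    = (t:ℂ)*(R:ℂ)*Complex.exp (Complex.I*(θ:ℂ)) from (mul_assoc _ _ _).symm]
  ring
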